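/- Let F be a real symmetric positive semidefinite n×n matrix and set C = (I + iF)², viewed as a complex matrix. Then C is invertible and the imaginary part of C⁻¹, defined as (C⁻¹ - (C⁻¹)*)/(2i), is negative semidefinite. Moreover it is negative definite if and only if F is positive definite. -/

import Mathlib

open Matrix
open scoped ComplexOrder
lemma aux_two_mul_pos {z : ℂ} : 0 < 2 * z ↔ 0 < z := by
  constructor <;> intro h <;> rw [Complex.lt_def] at * <;>
    simp only [Complex.mul_re, Complex.mul_im, Complex.zero_re, Complex.zero_im,
      Complex.re_ofNat, Complex.im_ofNat] at * <;>
    exact ⟨by linarith [h.1], by linarith [h.2]⟩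

lemma aux_posDef_of_det {𝕜 : Type*} [RCLike 𝕜] {A : Matrix (Fin n) (Fin n) 𝕜}
    (hA : A.PosSemidef) (h : IsUnit A.det) : A.PosDef := by
  refine PosDef.of_dotProduct_mulVec_pos hA.1 (fun x hx => ?_)
  have h1 : A *ᵥ x ≠ 0 :=
    (Matrix.mulVec_injective_iff_isUnit.mpr ((isUnit_iff_isUnit_det _).2 h)).ne_iff' (by simp) |>.2 hx
  have h2 := hA.dotProduct_mulVec_nonneg x
  rcases h2.lt_or_eq with h | h
  · exact h
  · exact absurd ((hA.dotProduct_mulVec_zero_iff x).1 h.symm) h1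

open scoped MatrixOrder in
lemma aux_psd_map {A : Matrix (Fin n) (Fin n) ℝ} (hA : A.PosSemidef) :
    (A.map Complex.ofReal).PosSemidef := by
  obtain ⟨B, hB⟩ := CStarAlgebra.nonneg_iff_eq_star_mul_self.mp hA.nonneg
  obtain rfl : A = Bᴴ * B := hB
  have : ((Bᴴ * B).map Complex.ofReal) = (B.map Complex.ofReal)ᴴ * (B.map Complex.ofReal) := by
    rw [show (Complex.ofReal : ℝ → ℂ) = ⇑Complex.ofRealHom from rfl, Matrix.map_mul]
    congr 1
    exact Matrix.conjTranspose_map _ (fun a => (Complex.conj_ofReal a).symm)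
  rw [this]
  exact posSemidef_conjTranspose_mul_self _

lemma aux_isUnit_conjTranspose {B : Matrix (Fin n) (Fin n) ℂ} (hB : IsUnit B) : IsUnit Bᴴ := by
  rw [isUnit_iff_isUnit_det, det_conjTranspose]
  exact ((isUnit_iff_isUnit_det _).1 hB).star

lemma aux_pd_conj {A B : Matrix (Fin n) (Fin n) ℂ} (hA : A.PosDef) (hB : IsUnit B) :
    (B * A * Bᴴ).PosDef := by
  refine PosDef.of_dotProduct_mulVec_pos (isHermitian_mul_mul_conjTranspose B hA.1) (fun x hx => ?_)
  have hx' : Bᴴ *ᵥ x ≠ 0 :=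
    (Matrix.mulVec_injective_iff_isUnit.mpr (aux_isUnit_conjTranspose hB)).ne_iff' (by simp) |>.2 hx
  have := hA.dotProduct_mulVec_pos hx'
  simpa only [star_mulVec, dotProduct_mulVec, vecMul_vecMul, conjTranspose_conjTranspose] using this

lemma aux_pd_conj_iff {A B : Matrix (Fin n) (Fin n) ℂ} (hB : IsUnit B) :
    (B * A * Bᴴ).PosDef ↔ A.PosDef := by
  refine ⟨fun h => ?_, fun h => aux_pd_conj h hB⟩
  have h2 := aux_pd_conj h (Matrix.isUnit_nonsing_inv_iff.2 hB)
  have e : B⁻¹ * (B * A * Bᴴ) * (B⁻¹)ᴴ = A := by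
    rw [conjTranspose_nonsing_inv, mul_assoc B A Bᴴ,
      Matrix.nonsing_inv_mul_cancel_left _ _ ((isUnit_iff_isUnit_det _).1 hB),
      Matrix.mul_nonsing_inv_cancel_right _ _
        ((isUnit_iff_isUnit_det _).1 (aux_isUnit_conjTranspose hB))]
  rwa [e] at h2

/-- For F real symmetric positive semidefinite and C = (I + iF)², the matrix C is
invertible, Im C⁻¹ = (C⁻¹ - (C⁻¹)*)/(2i) is negative semidefinite, and it is
negative definite iff F is positive definite. -/
theorem im_inv_neg_semidef
    (n : ℕ) (F : Matrix (Fin n) (Fin n) ℝ)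
    (hsymm : F.IsSymm) (hpsd : F.PosSemidef)
    (C : Matrix (Fin n) (Fin n) ℂ)
    (hC : C = (1 + Complex.I • F.map Complex.ofReal) ^ 2) :
    IsUnit C ∧
    (-((2 * Complex.I)⁻¹ • (C⁻¹ - (C⁻¹)ᴴ))).PosSemidef ∧
    ((-((2 * Complex.I)⁻¹ • (C⁻¹ - (C⁻¹)ᴴ))).PosDef ↔ F.PosDef) := by
  set G := F.map Complex.ofReal with hGdef
  have hGH : G.IsHermitian := by
    ext i j
    simp only [hGdef, conjTranspose_apply, Matrix.map_apply, Complex.star_def,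
      Complex.conj_ofReal, Complex.ofReal_inj]
    exact hsymm.apply i j
  have hGpsd : G.PosSemidef := aux_psd_map hpsd
  set A := 1 + Complex.I • G with hAdef
  have hAH : Aᴴ = 1 - Complex.I • G := by
    simp [hAdef, conjTranspose_add, conjTranspose_smul, Complex.star_def, Complex.conj_I,
      hGH.eq, sub_eq_add_neg, neg_smul]
  have hGGpsd : (G * G).PosSemidef := by
    have := posSemidef_conjTranspose_mul_self G
    rwa [hGH.eq] at this
  have hMpd : ((1 : Matrix (Fin n) (Fin n) ℂ) + G * G).PosDef :=
    Matrix.PosDef.add_posSemidef Matrix.PosDef.one hGGpsd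
  have hAAH : A * Aᴴ = 1 + G * G := by
    rw [hAH, hAdef]
    simp only [add_mul, mul_sub, mul_add, one_mul, mul_one, smul_add, smul_sub,
      smul_mul_assoc, mul_smul_comm, smul_smul, Complex.I_mul_I, neg_smul, one_smul,
      sub_neg_eq_add]
    module
  have hAunit : IsUnit A := by
    have h1 : IsUnit (A * Aᴴ) := hAAH ▸ hMpd.isUnit
    rw [isUnit_iff_isUnit_det] at *
    rw [det_mul] at h1
    exact isUnit_of_mul_isUnit_left h1
  have hCunit : IsUnit C := hC ▸ hAunit.pow 2
  have hCdet : IsUnit C.det := (isUnit_iff_isUnit_det _).1 hCunit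
  have hCHdet : IsUnit Cᴴ.det := (isUnit_iff_isUnit_det _).1 (aux_isUnit_conjTranspose hCunit)
  have hCHC : Cᴴ - C = (-4 * Complex.I) • G := by
    rw [hC, conjTranspose_pow, hAH, hAdef]
    simp only [pow_two, sub_mul, mul_sub, add_mul, mul_add, one_mul, mul_one, smul_mul_assoc,
      mul_smul_comm, smul_smul, Complex.I_mul_I, neg_smul, one_smul, sub_neg_eq_add]
    module
  have key : C⁻¹ - (C⁻¹)ᴴ = (-4 * Complex.I) • (C⁻¹ * G * (C⁻¹)ᴴ) := by
    rw [conjTranspose_nonsing_inv]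
    have h3 : C⁻¹ - (Cᴴ)⁻¹ = C⁻¹ * (Cᴴ - C) * (Cᴴ)⁻¹ := by
      rw [mul_sub, sub_mul, Matrix.mul_nonsing_inv_cancel_right _ _ hCHdet,
        Matrix.nonsing_inv_mul _ hCdet, one_mul]
    rw [h3, hCHC]
    simp only [mul_smul_comm, smul_mul_assoc]
  have hs : -((2 * Complex.I)⁻¹ * (-4 * Complex.I)) = 2 := by
    field_simp
    ring
  have hNform : -((2 * Complex.I)⁻¹ • (C⁻¹ - (C⁻¹)ᴴ)) = C⁻¹ * ((2:ℂ) • G) * (C⁻¹)ᴴ := by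
    rw [key, smul_smul, ← neg_smul, hs, mul_smul_comm, smul_mul_assoc]
  have h2Gpsd : ((2:ℂ) • G).PosSemidef := by
    rw [two_smul]; exact hGpsd.add hGpsd
  have h2GH : ((2:ℂ) • G).IsHermitian := h2Gpsd.1
  refine ⟨hCunit, ?_, ?_⟩
  · rw [hNform]
    exact h2Gpsd.mul_mul_conjTranspose_same C⁻¹
  · rw [hNform, aux_pd_conj_iff (Matrix.isUnit_nonsing_inv_iff.2 hCunit)]
    have h2G : ((2:ℂ) • G).PosDef ↔ G.PosDef := by
      constructor
      · intro h
        refine PosDef.of_dotProduct_mulVec_pos hGH (fun x hx => ?_)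
        have := h.dotProduct_mulVec_pos hx
        rwa [smul_mulVec, dotProduct_smul, smul_eq_mul, aux_two_mul_pos] at this
      · intro h
        refine PosDef.of_dotProduct_mulVec_pos h2GH (fun x hx => ?_)
        rw [smul_mulVec, dotProduct_smul, smul_eq_mul]
        exact aux_two_mul_pos.2 (h.dotProduct_mulVec_pos hx)
    rw [h2G]
    have hdet : (Complex.ofReal F.det : ℂ) = G.det := RingHom.map_det Complex.ofRealHom F
    constructor
    · intro h
      refine aux_posDef_of_det hpsd ?_
      have := h.det_pos.ne'
      rw [← hdet] at this
      exact (fun hF0 => this (by rw [hF0, Complex.ofReal_zero])) |> fun hne => (Ne.isUnit hne)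
    · intro h
      refine aux_posDef_of_det hGpsd ?_
      rw [← hdet]
      exact Ne.isUnit (by simpa using h.det_pos.ne')
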